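/- Let A, B, C be points in the Euclidean plane with B ≠ A and B ≠ C, and let β = ∠ABC. Then (dist A B + dist B C) / (2π − β) ≤ (dist A B + dist B C + dist A C) / (2π), i.e. the triangle inequality of Lemma 4 holds in non-strict form also for degenerate triangles. -/

import Mathlib

open Real EuclideanGeometry

/-- **Lemma 4, degenerate form**: for any points `A`, `B`, `C` in the plane with `B ≠ A`,
`B ≠ C` and `β = ∠ABC`, one has `(AB + BC)/(2π − β) ≤ (AB + BC + AC)/(2π)`. -/
theorem lemma4_weak (A B C : EuclideanSpace ℝ (Fin 2))
    (hBA : B ≠ A) (hBC : B ≠ C) :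
    (dist A B + dist B C) / (2 * π - ∠ A B C) ≤
      (dist A B + dist B C + dist A C) / (2 * π) := by
  set β := ∠ A B C with hβ
  have hβ0 : 0 ≤ β := angle_nonneg A B C
  have hβπ : β ≤ π := angle_le_pi A B C
  have hπ : 0 < π := Real.pi_pos
  set a := dist A B with ha
  set b := dist B C with hb
  set c := dist A C with hc
  have ha0 : 0 ≤ a := dist_nonneg
  have hb0 : 0 ≤ b := dist_nonneg
  have hc0 : 0 ≤ c := dist_nonneg
  -- law of cosines
  have hlaw : c * c = a * a + b * b - 2 * a * b * Real.cos β := by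
    rw [ha, hb, hc, hβ, dist_comm B C]
    exact EuclideanGeometry.law_cos A B C
  -- sin of half angle
  have hs : Real.sin (β / 2) ^ 2 = (1 - Real.cos β) / 2 := by
    have h1 := Real.cos_sq (β / 2)
    have h2 : 2 * (β / 2) = β := by ring
    rw [h2] at h1
    have h3 := Real.sin_sq_add_cos_sq (β / 2)
    linarith
  have hsin0 : 0 ≤ Real.sin (β / 2) :=
    Real.sin_nonneg_of_nonneg_of_le_pi (by linarith) (by linarith)
  -- c ≥ (a+b) sin(β/2)
  have hkey : (a + b) * Real.sin (β / 2) ≤ c := by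
    have hsq : ((a + b) * Real.sin (β / 2)) ^ 2 ≤ c ^ 2 := by
      have hc1 : Real.cos β ≤ 1 := Real.cos_le_one β
      have hcneg : -1 ≤ Real.cos β := Real.neg_one_le_cos β
      nlinarith [mul_nonneg (by linarith : (0:ℝ) ≤ 1 + Real.cos β) (sq_nonneg (a - b))]
    have h4 := Real.sqrt_le_sqrt hsq
    rwa [Real.sqrt_sq (by positivity), Real.sqrt_sq hc0] at h4
  -- Jordan inequality: sin(β/2) ≥ β/π
  have hjordan : β / π ≤ Real.sin (β / 2) := by
    have := Real.mul_le_sin (x := β / 2) (by linarith) (by linarith)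
    calc β / π = 2 / π * (β / 2) := by field_simp
    _ ≤ Real.sin (β / 2) := this
  -- the crucial inequality β(a+b) ≤ (2π−β) c
  have hmain : β * (a + b) ≤ (2 * π - β) * c := by
    have h1 : β * (a + b) ≤ (a + b) * Real.sin (β / 2) * π := by
      have := mul_le_mul_of_nonneg_left hjordan (by positivity : (0:ℝ) ≤ a + b)
      calc β * (a + b) = (a + b) * (β / π) * π := by field_simp
      _ ≤ (a + b) * Real.sin (β / 2) * π := by nlinarith
    have h2 : (a + b) * Real.sin (β / 2) * π ≤ c * π := by nlinarith
    nlinarith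
  have hd1 : 0 < 2 * π - β := by linarith
  rw [div_le_div_iff₀ hd1 (by linarith)]
  nlinarith
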